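/- If F is a set of vertices of Q_n with |F| ≤ 2n − 7 and every vertex outside F has at least two neighbors outside F, then there exists a coordinate j such that in each of the two subcubes L_j and R_j (induced by fixing the j-th bit to 0 and 1 respectively), every vertex outside F has at least two neighbors outside F within that subcube. -/

import Mathlib

def cube (n : ℕ) : SimpleGraph (Fin n → Bool) where
  Adj u v := (Finset.univ.filter fun i => u i ≠ v i).card = 1
  symm := ⟨by intro u v h; simpa [ne_comm] using h⟩
  loopless := ⟨by intro u h; simp at h⟩

instance (n : ℕ) : DecidableRel (cube n).Adj := fun u v =>
  inferInstanceAs (Decidable (_ = 1))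

def onesCount {n : ℕ} (u : Fin n → Bool) : ℕ :=
  (Finset.univ.filter fun i => u i = true).card

open Finset

lemma adj_iff {n : ℕ} {v w : Fin n → Bool} :
    (cube n).Adj v w ↔ ∃ i, w = Function.update v i (!v i) := by
  constructor
  · intro h
    obtain ⟨i, hi⟩ := Finset.card_eq_one.mp h
    refine ⟨i, funext fun k => ?_⟩
    by_cases hk : k = i
    · subst hk
      have : k ∈ Finset.univ.filter fun j => v j ≠ w j := by rw [hi]; simp
      simp only [Finset.mem_filter] at this
      rw [Function.update_self]
      cases h1 : v k <;> cases h2 : w k <;> simp_all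
    · have : k ∉ Finset.univ.filter fun j => v j ≠ w j := by rw [hi]; simp [hk]
      simp only [Finset.mem_filter, Finset.mem_univ, true_and, not_not] at this
      rw [Function.update_of_ne hk, this]
  · rintro ⟨i, rfl⟩
    show Finset.card _ = 1
    have : (Finset.univ.filter fun k => v k ≠ Function.update v i (!v i) k) = {i} := by
      ext k
      by_cases hk : k = i
      · subst hk; simp [Function.update_self]
      · simp [Function.update_of_ne hk, hk]
    rw [this]; simp

lemma flip_injective {n : ℕ} (v : Fin n → Bool) :
    Function.Injective fun i => Function.update v i (!v i) := by
  intro i i' h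
  by_contra hne
  have := congrFun h i
  dsimp only at this
  rw [Function.update_self, Function.update_of_ne hne] at this
  simp at this

lemma deg_eq {n : ℕ} (v : Fin n → Bool) :
    (Finset.univ.filter fun w => (cube n).Adj v w).card = n := by
  have : (Finset.univ.filter fun w => (cube n).Adj v w)
      = Finset.univ.image fun i => Function.update v i (!v i) := by
    ext w
    simp only [Finset.mem_filter, Finset.mem_univ, true_and, Finset.mem_image, adj_iff]
    exact exists_congr fun i => eq_comm
  rw [this, Finset.card_image_of_injective _ (flip_injective v)]
  simp

lemma common_le_two {n : ℕ} {u v : Fin n → Bool} (huv : u ≠ v) :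
    (Finset.univ.filter fun w => (cube n).Adj u w ∧ (cube n).Adj v w).card ≤ 2 := by
  set C := Finset.univ.filter fun w => (cube n).Adj u w ∧ (cube n).Adj v w with hC
  rcases C.eq_empty_or_nonempty with h | ⟨w₀, hw₀⟩
  · simp [h]
  · simp only [hC, Finset.mem_filter, Finset.mem_univ, true_and] at hw₀
    obtain ⟨i₀, hi₀⟩ := Finset.card_eq_one.mp hw₀.1
    obtain ⟨j₀, hj₀⟩ := Finset.card_eq_one.mp hw₀.2
    set D := Finset.univ.filter fun k => u k ≠ v k with hD
    have hDsub : D ⊆ {i₀, j₀} := by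
      intro k hk
      simp only [hD, Finset.mem_filter, Finset.mem_univ, true_and] at hk
      by_contra hk2
      simp only [Finset.mem_insert, Finset.mem_singleton, not_or] at hk2
      have h1 : k ∉ ({i₀} : Finset (Fin n)) := by simp [hk2.1]
      have h2 : k ∉ ({j₀} : Finset (Fin n)) := by simp [hk2.2]
      rw [← hi₀] at h1; rw [← hj₀] at h2
      simp only [Finset.mem_filter, Finset.mem_univ, true_and, not_not] at h1 h2
      exact hk (h1.trans h2.symm)
    have key : ∀ w ∈ C, ∀ i, (Finset.univ.filter fun k => u k ≠ w k) = {i} → i ∈ D := by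
      intro w hw i hi
      simp only [hC, Finset.mem_filter, Finset.mem_univ, true_and] at hw
      obtain ⟨j, hj⟩ := Finset.card_eq_one.mp hw.2
      simp only [hD, Finset.mem_filter, Finset.mem_univ, true_and]
      intro huvi
      have hiu : u i ≠ w i := by
        have : i ∈ Finset.univ.filter fun k => u k ≠ w k := by rw [hi]; simp
        simpa using this
      have hij : i = j := by
        have : i ∈ Finset.univ.filter fun k => v k ≠ w k := by
          simp only [Finset.mem_filter, Finset.mem_univ, true_and]
          rw [← huvi]; exact hiu
        rw [hj] at this; simpa using this
      apply huv
      funext k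
      by_cases hk : k = i
      · subst hk; exact huvi
      · have h1 : k ∉ ({i} : Finset (Fin n)) := by simp [hk]
        have h2 : k ∉ ({j} : Finset (Fin n)) := by simp [hij ▸ hk]
        rw [← hi] at h1; rw [← hj] at h2
        simp only [Finset.mem_filter, Finset.mem_univ, true_and, not_not] at h1 h2
        exact h1.trans h2.symm
    calc C.card ≤ (D.image fun k => ({k} : Finset (Fin n))).card := by
            apply Finset.card_le_card_of_injOn
              (fun w => Finset.univ.filter fun k => u k ≠ w k)
            · intro w hw
              have hw' := hw
              simp only [hC, Finset.mem_coe, Finset.mem_filter, Finset.mem_univ, true_and] at hw'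
              obtain ⟨i, hi⟩ := Finset.card_eq_one.mp hw'.1
              show (Finset.univ.filter fun k => u k ≠ w k) ∈ (D.image fun k => ({k} : Finset (Fin n)))
              rw [hi]
              exact Finset.mem_image_of_mem _ (key w hw i hi)
            · intro w hw w' hw' hff
              dsimp only at hff
              funext k
              by_cases hk : u k ≠ w k
              · have hk' : u k ≠ w' k := by
                  have : k ∈ Finset.univ.filter fun k => u k ≠ w k := by simpa using hk
                  rw [hff] at this; simpa using this
                cases h1 : w k <;> cases h2 : w' k <;> simp_all
              · have hk' : ¬ u k ≠ w' k := by
                  have : k ∉ Finset.univ.filter fun k => u k ≠ w k := by simpa using hk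
                  rw [hff] at this; simpa using this
                simp only [not_not] at hk hk'
                rw [← hk, hk']
      _ = D.card := Finset.card_image_of_injective _ Finset.singleton_injective
      _ ≤ ({i₀, j₀} : Finset (Fin n)).card := Finset.card_le_card hDsub
      _ ≤ 2 := Finset.card_insert_le _ _ |>.trans (by simp)

lemma split_card {n : ℕ} (F : Finset (Fin n → Bool)) (v : Fin n → Bool) :
    (Finset.univ.filter fun w => (cube n).Adj v w ∧ w ∉ F).card
      + (Finset.univ.filter fun w => (cube n).Adj v w ∧ w ∈ F).card = n := by
  have h := Finset.card_filter_add_card_filter_not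
    (s := Finset.univ.filter fun w => (cube n).Adj v w) (p := fun w => w ∉ F)
  rw [Finset.filter_filter, Finset.filter_filter, deg_eq] at h
  simp only [not_not] at h
  exact h

/-- two distinct "bad" vertices (≤ 2 fault-free neighbors) are impossible. -/
lemma bad_unique {n : ℕ} (hn : 5 ≤ n) (F : Finset (Fin n → Bool))
    (hF : F.card ≤ 2 * n - 7) {v v' : Fin n → Bool} (hvv : v ≠ v')
    (hv : (Finset.univ.filter fun w => (cube n).Adj v w ∧ w ∉ F).card ≤ 2)
    (hv' : (Finset.univ.filter fun w => (cube n).Adj v' w ∧ w ∉ F).card ≤ 2) :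
    False := by
  set A := Finset.univ.filter fun w => (cube n).Adj v w ∧ w ∈ F with hA
  set B := Finset.univ.filter fun w => (cube n).Adj v' w ∧ w ∈ F with hB
  have hAcard : n - 2 ≤ A.card := by
    have h := split_card F v; rw [← hA] at h; omega
  have hBcard : n - 2 ≤ B.card := by
    have h := split_card F v'; rw [← hB] at h; omega
  have hsub : A ∪ B ⊆ F := by
    intro w hw
    simp only [hA, hB, Finset.mem_union, Finset.mem_filter] at hw
    rcases hw with h | h
    · exact h.2.2
    · exact h.2.2
  have hinter : (A ∩ B).card ≤ 2 := by
    calc (A ∩ B).card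
        ≤ (Finset.univ.filter fun w => (cube n).Adj v w ∧ (cube n).Adj v' w).card := by
          apply Finset.card_le_card
          intro w hw
          simp only [hA, hB, Finset.mem_inter, Finset.mem_filter] at hw
          simp only [Finset.mem_filter, Finset.mem_univ, true_and]
          exact ⟨hw.1.2.1, hw.2.2.1⟩
      _ ≤ 2 := common_le_two hvv
  have hunion := Finset.card_union_add_card_inter A B
  have hle := Finset.card_le_card hsub
  omega

/-- removing one direction loses at most one fault-free neighbor. -/
lemma lose_at_most_one {n : ℕ} (F : Finset (Fin n → Bool)) (v : Fin n → Bool) (j : Fin n) :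
    (Finset.univ.filter fun w => (cube n).Adj v w ∧ w ∉ F).card ≤
      (Finset.univ.filter fun w => (cube n).Adj v w ∧ w ∉ F ∧ w j = v j).card + 1 := by
  have h := Finset.card_filter_add_card_filter_not
    (s := Finset.univ.filter fun w => (cube n).Adj v w ∧ w ∉ F) (p := fun w => w j = v j)
  rw [Finset.filter_filter, Finset.filter_filter] at h
  beta_reduce at h
  have hone : ((Finset.univ.filter fun w => ((cube n).Adj v w ∧ w ∉ F) ∧ ¬ w j = v j)).card ≤ 1 := by
    apply Finset.card_le_one.mpr
    intro a ha b hb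
    simp only [Finset.mem_filter, Finset.mem_univ, true_and] at ha hb
    obtain ⟨i, rfl⟩ := adj_iff.mp ha.1.1
    obtain ⟨i', rfl⟩ := adj_iff.mp hb.1.1
    have hi : i = j := by
      by_contra hij
      exact ha.2 (Function.update_of_ne (Ne.symm hij) _ _)
    have hi' : i' = j := by
      by_contra hij
      exact hb.2 (Function.update_of_ne (Ne.symm hij) _ _)
    rw [hi, hi']
  have h2 : (Finset.univ.filter fun w => ((cube n).Adj v w ∧ w ∉ F) ∧ w j = v j).card
      ≤ (Finset.univ.filter fun w => (cube n).Adj v w ∧ w ∉ F ∧ w j = v j).card := by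
    apply Finset.card_le_card
    intro w hw
    simp only [Finset.mem_filter] at hw ⊢
    tauto
  rw [← h]
  exact Nat.add_le_add h2 hone

theorem cube_good_splitting_coordinate' (n : ℕ) (hn : 5 ≤ n)
    (F : Finset (Fin n → Bool)) (hF : F.card ≤ 2 * n - 7)
    (hdeg : ∀ v ∉ F, 2 ≤ (Finset.univ.filter fun w => (cube n).Adj v w ∧ w ∉ F).card) :
    ∃ j : Fin n, ∀ v ∉ F,
      2 ≤ (Finset.univ.filter fun w => (cube n).Adj v w ∧ w ∉ F ∧ w j = v j).card := by
  by_cases hbad : ∃ v₀, v₀ ∉ F ∧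
      (Finset.univ.filter fun w => (cube n).Adj v₀ w ∧ w ∉ F).card ≤ 2
  · obtain ⟨v₀, hv₀F, hv₀⟩ := hbad
    have hS2 : (Finset.univ.filter fun w => (cube n).Adj v₀ w ∧ w ∉ F).card = 2 :=
      le_antisymm hv₀ (hdeg v₀ hv₀F)
    obtain ⟨u1, u2, hu12, hSeq⟩ := Finset.card_eq_two.mp hS2
    have hu1 : u1 ∈ Finset.univ.filter fun w => (cube n).Adj v₀ w ∧ w ∉ F := by
      rw [hSeq]; simp
    have hu2 : u2 ∈ Finset.univ.filter fun w => (cube n).Adj v₀ w ∧ w ∉ F := by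
      rw [hSeq]; simp
    simp only [Finset.mem_filter, Finset.mem_univ, true_and] at hu1 hu2
    obtain ⟨i1, he1⟩ := adj_iff.mp hu1.1
    obtain ⟨i2, he2⟩ := adj_iff.mp hu2.1
    have hcard : ({i1, i2} : Finset (Fin n)).card < Fintype.card (Fin n) := by
      have h1 := Finset.card_insert_le i1 ({i2} : Finset (Fin n))
      have h2 : ({i2} : Finset (Fin n)).card = 1 := Finset.card_singleton _
      simp only [Fintype.card_fin]
      omega
    have hcompl : (({i1, i2} : Finset (Fin n))ᶜ).Nonempty := by
      rw [← Finset.card_pos, Finset.card_compl]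
      omega
    obtain ⟨j, hj⟩ := hcompl
    rw [Finset.mem_compl, Finset.mem_insert, Finset.mem_singleton, not_or] at hj
    refine ⟨j, fun v hv => ?_⟩
    by_cases hvv : v = v₀
    · subst hvv
      have hsub : ({u1, u2} : Finset (Fin n → Bool)) ⊆
          Finset.univ.filter fun w => (cube n).Adj v w ∧ w ∉ F ∧ w j = v j := by
        intro w hw
        rw [Finset.mem_insert, Finset.mem_singleton] at hw
        simp only [Finset.mem_filter, Finset.mem_univ, true_and]
        rcases hw with rfl | rfl
        · exact ⟨hu1.1, hu1.2, by rw [he1]; exact Function.update_of_ne hj.1 _ _⟩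
        · exact ⟨hu2.1, hu2.2, by rw [he2]; exact Function.update_of_ne hj.2 _ _⟩
      calc 2 = ({u1, u2} : Finset (Fin n → Bool)).card := (Finset.card_pair hu12).symm
        _ ≤ _ := Finset.card_le_card hsub
    · have h3 : 3 ≤ (Finset.univ.filter fun w => (cube n).Adj v w ∧ w ∉ F).card := by
        by_contra hle
        push_neg at hle
        exact bad_unique hn F hF hvv (by omega) hv₀
      have h4 := lose_at_most_one F v j
      exact Nat.le_of_succ_le_succ (le_trans h3 h4)
  · push_neg at hbad
    refine ⟨⟨0, by omega⟩, fun v hv => ?_⟩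
    have h3 := hbad v hv
    have h4 := lose_at_most_one F v ⟨0, by omega⟩
    exact Nat.le_of_succ_le_succ (le_trans h3 h4)

/-- If |F| ≤ 2n − 7 and each fault-free vertex of Q_n (n ≥ 5) has at least two
fault-free neighbors, then there is a coordinate j such that each fault-free
vertex has at least two fault-free neighbors within its own subcube L_j or R_j. -/
theorem cube_good_splitting_coordinate (n : ℕ) (hn : 5 ≤ n)
    (F : Finset (Fin n → Bool)) (hF : F.card ≤ 2 * n - 7)
    (hdeg : ∀ v ∉ F, 2 ≤ (Finset.univ.filter fun w => (cube n).Adj v w ∧ w ∉ F).card) :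
    ∃ j : Fin n, ∀ v ∉ F,
      2 ≤ (Finset.univ.filter fun w => (cube n).Adj v w ∧ w ∉ F ∧ w j = v j).card := by
  exact cube_good_splitting_coordinate' n hn F hF hdeg
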